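/- Under the setup of the piecewise-continuous random infectivity function λ, the centered function λ̆(t) = λ(t) − E[λ(t)] satisfies, for all 0 ≤ s ≤ t: E[|λ̆(t) − λ̆(s)|²] ≤ 8(t−s)^{2α} + 4(λ*)²·k·Σ_{j=1}^{k−1}(F_j(t) − F_j(s)) + 4(λ*)²·(Σ_{j=1}^{k−1}(F_j(t) − F_j(s)))². -/

import Mathlib

open MeasureTheory

private lemma xi_mono' {Ω : Type*} (k : ℕ) (ξ : ℕ → Ω → EReal)
    (hξmono : ∀ ω, ∀ j < k, ξ j ω < ξ (j + 1) ω) (ω : Ω) :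
    ∀ i j, i ≤ j → j ≤ k → ξ i ω ≤ ξ j ω := by
  intro i j hij hjk
  induction j, hij using Nat.le_induction with
  | base => exact le_rfl
  | succ n hn ih =>
    exact le_trans (ih (by omega)) (le_of_lt (hξmono ω n (by omega)))

private lemma exists_index' {Ω : Type*} (k : ℕ) (ξ : ℕ → Ω → EReal)
    (hξ0 : ∀ ω, ξ 0 ω = 0) (hξk : ∀ ω, ξ k ω = ⊤) (ω : Ω) (u : ℝ) (hu : 0 ≤ u) :
    ∃ j, 1 ≤ j ∧ j ≤ k ∧ ξ (j - 1) ω ≤ (u : EReal) ∧ (u : EReal) < ξ j ω := by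
  classical
  have hPk : (u : EReal) < ξ k ω := by rw [hξk]; exact EReal.coe_lt_top u
  have hP : ∃ j, (u : EReal) < ξ j ω := ⟨k, hPk⟩
  set J := Nat.find hP with hJdef
  have hJ : (u : EReal) < ξ J ω := Nat.find_spec hP
  have hJk : J ≤ k := Nat.find_le hPk
  have hJ1 : 1 ≤ J := by
    rcases Nat.eq_zero_or_pos J with h | h
    · exfalso
      rw [h, hξ0 ω] at hJ
      exact absurd hJ (not_lt.2 (by exact_mod_cast hu))
    · exact h
  have hJm : ξ (J - 1) ω ≤ (u : EReal) :=
    not_lt.1 (Nat.find_min hP (by omega))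
  exact ⟨J, hJ1, hJk, hJm, hJ⟩

private lemma lam_eq_piece {Ω : Type*} (k : ℕ)
    (ξ : ℕ → Ω → EReal) (lamj : ℕ → Ω → ℝ → ℝ) (lam : Ω → ℝ → ℝ)
    (hξmono : ∀ ω, ∀ j < k, ξ j ω < ξ (j + 1) ω)
    (hdecomp : ∀ ω t, 0 ≤ t →
      lam ω t = ∑ j ∈ Finset.Icc 1 k,
        (if ξ (j - 1) ω ≤ (t : EReal) ∧ (t : EReal) < ξ j ω then lamj j ω t else 0))
    (ω : Ω) (u : ℝ) (hu : 0 ≤ u) (J : ℕ) (hJ1 : 1 ≤ J) (hJk : J ≤ k)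
    (hlo : ξ (J - 1) ω ≤ (u : EReal)) (hhi : (u : EReal) < ξ J ω) :
    lam ω u = lamj J ω u := by
  rw [hdecomp ω u hu]
  rw [Finset.sum_eq_single_of_mem J (Finset.mem_Icc.2 ⟨hJ1, hJk⟩)]
  · rw [if_pos ⟨hlo, hhi⟩]
  · intro b hb hbJ
    rw [Finset.mem_Icc] at hb
    rw [if_neg]
    rintro ⟨h1, h2⟩
    rcases lt_or_gt_of_ne hbJ with h | h
    · have hbb : ξ b ω ≤ ξ (J - 1) ω := xi_mono' k ξ hξmono ω b (J - 1) (by omega) (by omega)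
      exact absurd (lt_of_lt_of_le h2 (hbb.trans hlo)) (lt_irrefl _)
    · have hbb : ξ J ω ≤ ξ (b - 1) ω := xi_mono' k ξ hξmono ω J (b - 1) (by omega) (by omega)
      exact absurd (lt_of_lt_of_le hhi (hbb.trans h1)) (lt_irrefl _)

/-- second-moment increment bound for the centered infectivity
function `λ̆(t) = λ(t) − E[λ(t)]`: for `0 ≤ s ≤ t`,
`E[|λ̆(t) − λ̆(s)|²] ≤ 8(t−s)^{2α} + 4(λ*)²·k·Σ_j(F_j(t)−F_j(s)) + 4(λ*)²·(Σ_j(F_j(t)−F_j(s)))²`. -/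
theorem infectivity_centered_second_moment_increment_bound
    {Ω : Type*} [MeasurableSpace Ω] (μ : Measure Ω) [IsProbabilityMeasure μ]
    (k : ℕ) (hk : 1 ≤ k)
    (ξ : ℕ → Ω → EReal) (lamj : ℕ → Ω → ℝ → ℝ) (lam : Ω → ℝ → ℝ)
    (lamstar α : ℝ) (hlamstar : 0 < lamstar) (hα : 0 < α)
    (hξmeas : ∀ j, Measurable (fun ω => ξ j ω))
    (hlammeas : ∀ t : ℝ, Measurable (fun ω => lam ω t))
    (hξ0 : ∀ ω, ξ 0 ω = 0)
    (hξk : ∀ ω, ξ k ω = ⊤)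
    (hξmono : ∀ ω, ∀ j < k, ξ j ω < ξ (j + 1) ω)
    (hcont : ∀ j ω, Continuous (lamj j ω))
    (hdecomp : ∀ ω t, 0 ≤ t →
      lam ω t = ∑ j ∈ Finset.Icc 1 k,
        (if ξ (j - 1) ω ≤ (t : EReal) ∧ (t : EReal) < ξ j ω then lamj j ω t else 0))
    (hholder : ∀ᵐ ω ∂μ, ∀ s t : ℝ, 0 ≤ s → s ≤ t → ∀ j ∈ Finset.Icc 1 k,
      |lamj j ω t - lamj j ω s| ≤ (t - s) ^ α)
    (hbound : ∀ᵐ ω ∂μ, ∀ u : ℝ, 0 ≤ u → 0 ≤ lam ω u ∧ lam ω u ≤ lamstar) :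
    ∀ s t : ℝ, 0 ≤ s → s ≤ t →
      (∫ ω, ((lam ω t - ∫ ω', lam ω' t ∂μ) - (lam ω s - ∫ ω', lam ω' s ∂μ)) ^ 2 ∂μ)
        ≤ 8 * (t - s) ^ (2 * α)
          + 4 * lamstar ^ 2 * k * ∑ j ∈ Finset.Icc 1 (k - 1),
              ((μ {ω | ξ j ω ≤ (t : EReal)}).toReal - (μ {ω | ξ j ω ≤ (s : EReal)}).toReal)
          + 4 * lamstar ^ 2 * (∑ j ∈ Finset.Icc 1 (k - 1),
              ((μ {ω | ξ j ω ≤ (t : EReal)}).toReal - (μ {ω | ξ j ω ≤ (s : EReal)}).toReal)) ^ 2 := by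
  intro s t hs hst
  classical
  have ht : (0:ℝ) ≤ t := hs.trans hst
  set X : Ω → ℝ := fun ω => lam ω t - lam ω s with hXdef
  set A : ℕ → Set Ω := fun j => {ω | ξ j ω ≤ (t:EReal)} \ {ω | ξ j ω ≤ (s:EReal)} with hAdef
  set B : Set Ω := ⋃ j ∈ Finset.Icc 1 (k-1), A j with hBdef
  have hmle : ∀ (r : ℝ) j, MeasurableSet {ω | ξ j ω ≤ (r:EReal)} :=
    fun r j => (hξmeas j) measurableSet_Iic
  have hAmeas : ∀ j, MeasurableSet (A j) := fun j => (hmle t j).diff (hmle s j)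
  have hBmeas : MeasurableSet B := Finset.measurableSet_biUnion _ fun j _ => hAmeas j
  have hts : (0:ℝ) ≤ t - s := by linarith
  have hApow : (0:ℝ) ≤ (t - s) ^ (2*α) := Real.rpow_nonneg hts _
  have hsq : ((t - s) ^ α) ^ 2 = (t - s) ^ (2*α) := by
    rw [← Real.rpow_natCast ((t-s)^α) 2, ← Real.rpow_mul hts]
    norm_num [mul_comm]
  -- pointwise a.e. bound
  have hindnn : ∀ ω, (0:ℝ) ≤ B.indicator (fun _ => (1:ℝ)) ω :=
    fun ω => Set.indicator_nonneg (fun _ _ => zero_le_one) ω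
  have hpt : ∀ᵐ ω ∂μ, X ω ^ 2 ≤ 2 * (t - s) ^ (2*α)
      + 2 * lamstar^2 * B.indicator (fun _ => (1:ℝ)) ω := by
    filter_upwards [hholder, hbound] with ω hH hb
    obtain ⟨Js, hJs1, hJsk, hJslo, hJshi⟩ := exists_index' k ξ hξ0 hξk ω s hs
    obtain ⟨Jt, hJt1, hJtk, hJtlo, hJthi⟩ := exists_index' k ξ hξ0 hξk ω t ht
    have hlams := lam_eq_piece k ξ lamj lam hξmono hdecomp ω s hs Js hJs1 hJsk hJslo hJshi
    have hlamt := lam_eq_piece k ξ lamj lam hξmono hdecomp ω t ht Jt hJt1 hJtk hJtlo hJthi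
    have hJle : Js ≤ Jt := by
      by_contra h
      push_neg at h
      have h1 : ξ Jt ω ≤ ξ (Js - 1) ω := xi_mono' k ξ hξmono ω _ _ (by omega) (by omega)
      have h2 : (t:EReal) < (s:EReal) := lt_of_lt_of_le hJthi (h1.trans hJslo)
      have : t < s := by exact_mod_cast h2
      linarith
    have hindub : (0:ℝ) ≤ 2 * lamstar^2 * B.indicator (fun _ => (1:ℝ)) ω :=
      mul_nonneg (by positivity) (hindnn ω)
    rcases eq_or_lt_of_le hJle with heq | hlt
    · -- same piece: Hölder
      have habs : |X ω| ≤ (t - s) ^ α := by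
        have := hH s t hs hst Js (Finset.mem_Icc.2 ⟨hJs1, hJsk⟩)
        simp only [hXdef, hlams, hlamt, ← heq]
        exact this
      have : X ω ^ 2 ≤ (t - s) ^ (2*α) := by
        rw [← hsq, ← sq_abs (X ω)]
        exact pow_le_pow_left₀ (abs_nonneg _) habs 2
      linarith
    · -- crossed a breakpoint: ω ∈ B
      have hmemA : ω ∈ A Js := by
        constructor
        · have h1 : ξ Js ω ≤ ξ (Jt - 1) ω := xi_mono' k ξ hξmono ω _ _ (by omega) (by omega)
          exact h1.trans hJtlo
        · exact fun hle => absurd (lt_of_lt_of_le hJshi hle) (lt_irrefl _)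
      have hmemB : ω ∈ B := Set.mem_biUnion (Finset.mem_Icc.2 ⟨hJs1, by omega⟩) hmemA
      have hind1 : B.indicator (fun _ => (1:ℝ)) ω = 1 := Set.indicator_of_mem hmemB _
      have habs : |X ω| ≤ lamstar := by
        obtain ⟨h1, h2⟩ := hb s hs
        obtain ⟨h3, h4⟩ := hb t ht
        simp only [hXdef]
        exact abs_le.2 ⟨by linarith, by linarith⟩
      have hX2 : X ω ^ 2 ≤ lamstar ^ 2 := by
        rw [← sq_abs (X ω)]
        exact pow_le_pow_left₀ (abs_nonneg _) habs 2
      rw [hind1]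
      nlinarith
  -- integrability
  have hXmeas : Measurable X := (hlammeas t).sub (hlammeas s)
  have hXab : ∀ᵐ ω ∂μ, ‖X ω‖ ≤ lamstar := by
    filter_upwards [hbound] with ω hb
    obtain ⟨h1, h2⟩ := hb s hs
    obtain ⟨h3, h4⟩ := hb t ht
    rw [Real.norm_eq_abs]
    exact abs_le.2 ⟨by simp only [hXdef]; linarith, by simp only [hXdef]; linarith⟩
  have hXint : Integrable X μ :=
    (integrable_const lamstar).mono' hXmeas.aestronglyMeasurable hXab
  have hX2int : Integrable (fun ω => X ω ^ 2) μ := by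
    refine (integrable_const (lamstar^2)).mono' ((hXmeas.pow_const 2).aestronglyMeasurable) ?_
    filter_upwards [hXab] with ω h
    rw [Real.norm_eq_abs] at h
    rw [Real.norm_eq_abs, abs_pow]
    exact pow_le_pow_left₀ (abs_nonneg _) h 2
  have hltint : ∀ r : ℝ, 0 ≤ r → Integrable (fun ω => lam ω r) μ := by
    intro r hr
    refine (integrable_const lamstar).mono' (hlammeas r).aestronglyMeasurable ?_
    filter_upwards [hbound] with ω hb
    obtain ⟨h1, h2⟩ := hb r hr
    rw [Real.norm_eq_abs]
    exact abs_le.2 ⟨by linarith, h2⟩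
  set c : ℝ := (∫ ω', lam ω' t ∂μ) - (∫ ω', lam ω' s ∂μ) with hcdef
  have hc : ∫ ω, X ω ∂μ = c := by
    simp only [hXdef]
    exact integral_sub (hltint t ht) (hltint s hs)
  -- variance ≤ second moment
  have hvar : (∫ ω, (X ω - c) ^ 2 ∂μ) ≤ ∫ ω, X ω ^ 2 ∂μ := by
    have hexp : ∀ ω, (X ω - c) ^ 2 = (X ω ^ 2 - (2*c) * X ω) + c^2 := by intro ω; ring
    have h1 : Integrable (fun ω => X ω ^ 2 - (2*c) * X ω) μ :=
      hX2int.sub (hXint.const_mul _)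
    calc (∫ ω, (X ω - c) ^ 2 ∂μ)
        = ∫ ω, ((X ω ^ 2 - (2*c) * X ω) + c^2) ∂μ := by simp_rw [hexp]
      _ = (∫ ω, (X ω ^ 2 - (2*c) * X ω) ∂μ) + (∫ _ω, c^2 ∂μ) :=
          integral_add h1 (integrable_const _)
      _ = (∫ ω, X ω ^ 2 ∂μ) - (2*c) * (∫ ω, X ω ∂μ) + c^2 := by
          rw [integral_sub hX2int (hXint.const_mul _), integral_const_mul, integral_const,
            measureReal_def, measure_univ, ENNReal.toReal_one, one_smul]
      _ ≤ ∫ ω, X ω ^ 2 ∂μ := by rw [hc]; nlinarith [sq_nonneg c]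
  -- integral of the bound
  have hindint : Integrable (B.indicator (fun _ => (1:ℝ))) μ :=
    (integrable_const (1:ℝ)).indicator hBmeas
  have hgint : Integrable (fun ω => 2 * (t - s) ^ (2*α)
      + 2 * lamstar^2 * B.indicator (fun _ => (1:ℝ)) ω) μ :=
    (integrable_const _).add (hindint.const_mul _)
  have hmain : (∫ ω, X ω ^ 2 ∂μ) ≤ 2 * (t - s) ^ (2*α) + 2 * lamstar^2 * (μ B).toReal := by
    calc (∫ ω, X ω ^ 2 ∂μ)
        ≤ ∫ ω, (2 * (t - s) ^ (2*α) + 2 * lamstar^2 * B.indicator (fun _ => (1:ℝ)) ω) ∂μ :=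
          integral_mono_ae hX2int hgint hpt
      _ = 2 * (t - s) ^ (2*α) + 2 * lamstar^2 * (μ B).toReal := by
          rw [integral_add (integrable_const _) (hindint.const_mul _), integral_const,
            measureReal_def, measure_univ, ENNReal.toReal_one, one_smul, integral_const_mul,
            integral_indicator_const _ hBmeas, measureReal_def, smul_eq_mul, mul_one]
  -- measure of B vs sum of distribution increments
  set S : ℝ := ∑ j ∈ Finset.Icc 1 (k - 1),
      ((μ {ω | ξ j ω ≤ (t : EReal)}).toReal - (μ {ω | ξ j ω ≤ (s : EReal)}).toReal) with hSdef
  have hsub : ∀ j, {ω | ξ j ω ≤ (s:EReal)} ⊆ {ω | ξ j ω ≤ (t:EReal)} := by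
    intro j ω h
    exact le_trans h (EReal.coe_le_coe_iff.2 hst)
  have hAtoReal : ∀ j, (μ (A j)).toReal
      = (μ {ω | ξ j ω ≤ (t:EReal)}).toReal - (μ {ω | ξ j ω ≤ (s:EReal)}).toReal := by
    intro j
    rw [hAdef]
    rw [measure_diff (hsub j) (hmle s j).nullMeasurableSet (measure_ne_top μ _),
      ENNReal.toReal_sub_of_le (measure_mono (hsub j)) (measure_ne_top μ _)]
  have hTS : (μ B).toReal ≤ S := by
    have h1 : μ B ≤ ∑ j ∈ Finset.Icc 1 (k-1), μ (A j) := measure_biUnion_finset_le _ _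
    have h2 : (μ B).toReal ≤ (∑ j ∈ Finset.Icc 1 (k-1), μ (A j)).toReal :=
      ENNReal.toReal_mono (ENNReal.sum_ne_top.2 fun j _ => measure_ne_top μ _) h1
    rw [ENNReal.toReal_sum (fun j _ => measure_ne_top μ _)] at h2
    calc (μ B).toReal ≤ ∑ j ∈ Finset.Icc 1 (k-1), (μ (A j)).toReal := h2
      _ = S := Finset.sum_congr rfl fun j _ => hAtoReal j
  have hSnn : 0 ≤ S := by
    apply Finset.sum_nonneg
    intro j _
    exact sub_nonneg.2 (ENNReal.toReal_mono (measure_ne_top μ _) (measure_mono (hsub j)))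
  have hTnn : 0 ≤ (μ B).toReal := ENNReal.toReal_nonneg
  -- rewrite the goal's integrand
  have hgoal_eq : (∫ ω, ((lam ω t - ∫ ω', lam ω' t ∂μ) - (lam ω s - ∫ ω', lam ω' s ∂μ)) ^ 2 ∂μ)
      = ∫ ω, (X ω - c) ^ 2 ∂μ := by
    congr 1
    funext ω
    simp only [hXdef, hcdef]
    ring
  rw [hgoal_eq]
  have hk1 : (1:ℝ) ≤ (k:ℝ) := by exact_mod_cast hk
  have hchain : (∫ ω, (X ω - c) ^ 2 ∂μ) ≤ 2 * (t - s) ^ (2*α) + 2 * lamstar^2 * S := by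
    have := hvar.trans hmain
    nlinarith [mul_le_mul_of_nonneg_left hTS (by positivity : (0:ℝ) ≤ 2 * lamstar^2)]
  have hfin : 2 * (t - s) ^ (2*α) + 2 * lamstar^2 * S
      ≤ 8 * (t - s) ^ (2*α) + 4 * lamstar^2 * (k:ℝ) * S + 4 * lamstar^2 * S^2 := by
    nlinarith [mul_nonneg (mul_nonneg (by positivity : (0:ℝ) ≤ 4 * lamstar^2) hSnn)
      (sub_nonneg.2 hk1), sq_nonneg S, mul_nonneg (by positivity : (0:ℝ) ≤ lamstar^2) hSnn]
  exact hchain.trans hfin
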